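/- arXiv:2409.01732 — 2 statements merged into one kernel-verified Lean document; each statement's English description precedes it below -/
import Mathlib

section
/- If a graph G is a subgraph of P ⊠ H for a path P and a graph H of treewidth t, then for every vertex v of G and every k ≥ 0, the subgraph of G induced by the k-th closed neighborhood N^k[v] has treewidth at most (2k+1)(t+1) − 1. -/
open SimpleGraph

/-- The strong product of two simple graphs. -/
def strongProd {α β : Type*} (G : SimpleGraph α) (H : SimpleGraph β) :
    SimpleGraph (α × β) where
  Adj x y := (x.1 = y.1 ∧ H.Adj x.2 y.2) ∨ (x.2 = y.2 ∧ G.Adj x.1 y.1) ∨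
    (G.Adj x.1 y.1 ∧ H.Adj x.2 y.2)
  symm := by
    constructor
    rintro ⟨a, b⟩ ⟨c, d⟩ (⟨h1, h2⟩ | ⟨h1, h2⟩ | ⟨h1, h2⟩)
    exacts [Or.inl ⟨h1.symm, h2.symm⟩, Or.inr (Or.inl ⟨h1.symm, h2.symm⟩),
      Or.inr (Or.inr ⟨h1.symm, h2.symm⟩)]
  loopless := by
    constructor
    rintro ⟨a, b⟩ (⟨-, h⟩ | ⟨-, h⟩ | ⟨h, -⟩) <;> exact h.ne rfl

/-- Add a new vertex (`none`) to a graph, adjacent exactly to the vertices in `s`. -/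
def addVertex {V : Type} (H : SimpleGraph V) (s : Set V) : SimpleGraph (Option V) where
  Adj x y := match x, y with
    | some a, some b => H.Adj a b
    | some a, none => a ∈ s
    | none, some b => b ∈ s
    | none, none => False
  symm := by
    constructor
    rintro (_ | a) (_ | b) h <;> simp_all
    exact h.symm
  loopless := by
    constructor
    rintro (_ | a) h <;> simp_all

/-- `IsKTree t V H`: the graph `H` on vertex type `V` is a `t`-tree, i.e. it is `K_{t+1}`
or obtained from a smaller `t`-tree by adding a vertex whose neighborhood is a `t`-clique. -/
inductive IsKTree (t : ℕ) : (V : Type) → SimpleGraph V → Prop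
  | base : IsKTree t (Fin (t + 1)) ⊤
  | extend {V : Type} {H : SimpleGraph V} (hH : IsKTree t V H) (s : Finset V)
      (hcard : s.card = t) (hclique : H.IsClique ↑s) :
      IsKTree t (Option V) (addVertex H ↑s)

/-- A graph has treewidth at most `t` if it is a subgraph of some `t`-tree. -/
def HasTreewidthLE {α : Type} (G : SimpleGraph α) (t : ℕ) : Prop :=
  ∃ (V : Type) (H : SimpleGraph V), IsKTree t V H ∧
    ∃ f : α ↪ V, ∀ u v, G.Adj u v → H.Adj (f u) (f v)

-- helper adjacency lemmas
lemma addVertex_some_some {V : Type} (H : SimpleGraph V) (s : Set V) (a b : V) :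
    (addVertex H s).Adj (some a) (some b) ↔ H.Adj a b := Iff.rfl
lemma addVertex_some_none {V : Type} (H : SimpleGraph V) (s : Set V) (a : V) :
    (addVertex H s).Adj (some a) none ↔ a ∈ s := Iff.rfl
lemma addVertex_none_some {V : Type} (H : SimpleGraph V) (s : Set V) (b : V) :
    (addVertex H s).Adj none (some b) ↔ b ∈ s := Iff.rfl
lemma addVertex_none_none {V : Type} (H : SimpleGraph V) (s : Set V) :
    ¬ (addVertex H s).Adj none none := fun h => h

lemma clique_extend {t : ℕ} {V : Type} {T : SimpleGraph V} (h : IsKTree t V T) :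
    ∀ c : Finset V, T.IsClique ↑c → ∃ d : Finset V, c ⊆ d ∧ d.card = t + 1 ∧ T.IsClique ↑d := by
  classical
  induction h with
  | base =>
      intro c _
      exact ⟨Finset.univ, Finset.subset_univ c, by simp, fun a _ b _ hab => hab⟩
  | @extend V T hT s hcard hclq ih =>
      intro c hc
      by_cases hn : none ∈ c
      · refine ⟨insert none (s.image some), ?_, ?_, ?_⟩
        · intro x hx
          match x with
          | none => exact Finset.mem_insert_self _ _
          | some a =>
            have hadj := hc (Finset.mem_coe.2 hx) (Finset.mem_coe.2 hn) (by simp)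
            rw [addVertex_some_none] at hadj
            exact Finset.mem_insert_of_mem (Finset.mem_image_of_mem _ hadj)
        · rw [Finset.card_insert_of_notMem (by simp),
            Finset.card_image_of_injective _ (Option.some_injective _), hcard]
        · intro x hx y hy hxy
          simp only [Finset.coe_insert, Set.mem_insert_iff, Finset.coe_image,
            Set.mem_image, Finset.mem_coe] at hx hy
          rcases hx with rfl | ⟨a, ha, rfl⟩
          · rcases hy with rfl | ⟨b, hb, rfl⟩
            · exact absurd rfl hxy
            · exact (addVertex_none_some _ _ _).2 hb
          · rcases hy with rfl | ⟨b, hb, rfl⟩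
            · exact (addVertex_some_none _ _ _).2 ha
            · exact (addVertex_some_some _ _ _ _).2
                (hclq ha hb (fun hab => hxy (by rw [hab])))
      · -- c consists of `some` vertices
        have hker : Set.InjOn some (some ⁻¹' ↑c) :=
          (Option.some_injective V).injOn
        set c' : Finset V := c.preimage some hker with hc'
        have hcc' : ∀ x ∈ c, ∃ a ∈ c', some a = x := by
          intro x hx
          match x with
          | none => exact absurd hx hn
          | some a => exact ⟨a, Finset.mem_preimage.2 hx, rfl⟩
        have hclq' : T.IsClique ↑c' := by
          intro a ha b hb hab
          have := hc (Finset.mem_coe.2 (Finset.mem_preimage.1 ha))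
            (Finset.mem_coe.2 (Finset.mem_preimage.1 hb)) (by simpa using hab)
          exact (addVertex_some_some _ _ _ _).1 this
        obtain ⟨d', hsub, hdcard, hdclq⟩ := ih c' hclq'
        refine ⟨d'.image some, ?_, ?_, ?_⟩
        · intro x hx
          obtain ⟨a, ha, rfl⟩ := hcc' x hx
          exact Finset.mem_image_of_mem _ (hsub ha)
        · rw [Finset.card_image_of_injective _ (Option.some_injective _), hdcard]
        · intro x hx y hy hxy
          simp only [Finset.coe_image, Set.mem_image, Finset.mem_coe] at hx hy
          obtain ⟨a, ha, rfl⟩ := hx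
          obtain ⟨b, hb, rfl⟩ := hy
          exact (addVertex_some_some _ _ _ _).2
            (hdclq ha hb (fun hab => hxy (by rw [hab])))

lemma ktree_attach {N : ℕ} {V : Type} {W : SimpleGraph V} (hW : IsKTree N V W)
    (A : Finset V) (hA : W.IsClique ↑A) (hAcard : A.card = N + 1) :
    ∀ (n : ℕ) (A₀ : Finset V), A₀ ⊆ A → A₀.card + n = N + 1 →
    ∃ (V' : Type) (W' : SimpleGraph V') (g : V ↪ V') (y : Fin n → V'),
      IsKTree N V' W' ∧
      (∀ u v, W.Adj u v → W'.Adj (g u) (g v)) ∧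
      Function.Injective y ∧
      (∀ i a, y i ≠ g a) ∧
      (∀ i j, i ≠ j → W'.Adj (y i) (y j)) ∧
      (∀ i a, a ∈ A₀ → W'.Adj (y i) (g a)) := by
  classical
  intro n
  induction n with
  | zero =>
      intro A₀ _ _
      exact ⟨V, W, Function.Embedding.refl V, Fin.elim0, hW, fun u v h => h,
        fun i => i.elim0, fun i => i.elim0, fun i => i.elim0, fun i => i.elim0⟩
  | succ n ih =>
      intro A₀ hsub hcard
      obtain ⟨b, hbA, hbA₀⟩ : ∃ b ∈ A, b ∉ A₀ := by
        by_contra hcon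
        push_neg at hcon
        have := Finset.card_le_card (fun x hx => hcon x hx)
        omega
      obtain ⟨V', W', g, y, hW', hg, hyinj, hyg, hyy, hyA⟩ :=
        ih (insert b A₀) (Finset.insert_subset hbA hsub)
          (by rw [Finset.card_insert_of_notMem hbA₀]; omega)
      set C : Finset V' := A₀.image g ∪ Finset.image y Finset.univ with hCdef
      have hdisj : Disjoint (A₀.image g) (Finset.image y Finset.univ) := by
        rw [Finset.disjoint_left]
        rintro x hx hx'
        simp only [Finset.mem_image, Finset.mem_univ, true_and] at hx hx'
        obtain ⟨a, _, rfl⟩ := hx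
        obtain ⟨i, hi⟩ := hx'
        exact hyg i a hi
      have hCcard : C.card = N := by
        rw [hCdef, Finset.card_union_of_disjoint hdisj,
          Finset.card_image_of_injective _ g.injective,
          Finset.card_image_of_injective _ hyinj, Finset.card_univ, Fintype.card_fin]
        omega
      have hCmem_g : ∀ a ∈ A₀, g a ∈ C := fun a ha =>
        Finset.mem_union_left _ (Finset.mem_image_of_mem _ ha)
      have hCmem_y : ∀ i, y i ∈ C := fun i =>
        Finset.mem_union_right _ (Finset.mem_image_of_mem _ (Finset.mem_univ i))
      have hCclq : W'.IsClique ↑C := by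
        intro x hx z hz hxz
        simp only [hCdef, Finset.coe_union, Set.mem_union, Finset.coe_image,
          Set.mem_image, Finset.mem_coe, Finset.coe_univ, Set.mem_univ, true_and,
          Set.image_univ, Set.mem_range] at hx hz
        rcases hx with ⟨a, ha, rfl⟩ | ⟨i, rfl⟩
        · rcases hz with ⟨a', ha', rfl⟩ | ⟨i, rfl⟩
          · exact hg _ _ (hA (hsub ha) (hsub ha')
              (fun h => hxz (by rw [h])))
          · exact (hyA i a (Finset.mem_insert_of_mem ha)).symm
        · rcases hz with ⟨a', ha', rfl⟩ | ⟨j, rfl⟩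
          · exact hyA i a' (Finset.mem_insert_of_mem ha')
          · exact hyy i j (fun h => hxz (by rw [h]))
      refine ⟨Option V', addVertex W' ↑C,
        g.trans ⟨some, Option.some_injective _⟩,
        Fin.cases none (fun i => some (y i)),
        IsKTree.extend hW' C hCcard hCclq, ?_, ?_, ?_, ?_, ?_⟩
      · intro u v h
        exact (addVertex_some_some _ _ _ _).2 (hg u v h)
      · intro i j h
        induction i using Fin.cases with
        | zero =>
            induction j using Fin.cases with
            | zero => rfl
            | succ j => simp at h
        | succ i =>
            induction j using Fin.cases with
            | zero => simp at h
            | succ j =>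
                simp only [Fin.cases_succ, Option.some.injEq] at h
                rw [hyinj h]
      · intro i a
        induction i using Fin.cases with
        | zero => simp
        | succ i =>
            simp only [Fin.cases_succ, Function.Embedding.trans_apply,
              Function.Embedding.coeFn_mk, ne_eq, Option.some.injEq]
            exact hyg i a
      · intro i j hij
        induction i using Fin.cases with
        | zero =>
            induction j using Fin.cases with
            | zero => exact absurd rfl hij
            | succ j =>
                simp only [Fin.cases_zero, Fin.cases_succ]
                exact (addVertex_none_some _ _ _).2 (Finset.mem_coe.2 (hCmem_y j))
        | succ i =>
            induction j using Fin.cases with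
            | zero =>
                simp only [Fin.cases_zero, Fin.cases_succ]
                exact (addVertex_some_none _ _ _).2 (Finset.mem_coe.2 (hCmem_y i))
            | succ j =>
                simp only [Fin.cases_succ]
                exact (addVertex_some_some _ _ _ _).2
                  (hyy i j (fun h => hij (by rw [h])))
      · intro i a ha
        induction i using Fin.cases with
        | zero =>
            simp only [Fin.cases_zero]
            exact (addVertex_none_some _ _ _).2 (Finset.mem_coe.2 (hCmem_g a ha))
        | succ i =>
            simp only [Fin.cases_succ]
            exact (addVertex_some_some _ _ _ _).2 (hyA i a (Finset.mem_insert_of_mem ha))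

lemma blowup_treewidth {t : ℕ} {V : Type} {T : SimpleGraph V} (h : IsKTree t V T) :
    ∀ n : ℕ, 1 ≤ n →
      HasTreewidthLE (strongProd (⊤ : SimpleGraph (Fin n)) T) (n * (t + 1) - 1) := by
  classical
  induction h with
  | base =>
      intro n hn
      have hpos : 0 < n * (t + 1) := Nat.mul_pos hn t.succ_pos
      have he : n * (t + 1) - 1 + 1 = n * (t + 1) := Nat.succ_pred_eq_of_pos hpos
      refine ⟨Fin (n * (t + 1) - 1 + 1), ⊤, IsKTree.base,
        (finProdFinEquiv.trans (finCongr he.symm)).toEmbedding, ?_⟩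
      intro u v huv
      simp only [top_adj, ne_eq]
      intro hEq
      exact huv.ne (Function.Embedding.injective _ hEq)
  | @extend V T hT s hcard hclq ih =>
      intro n hn
      obtain ⟨d, hsd, hdcard, hdclq⟩ := clique_extend hT s hclq
      obtain ⟨V', W', hW', g0, hg0⟩ := ih n hn
      have hmul : n * (t + 1) = n * t + n := by ring
      have hpos : 0 < n * (t + 1) := Nat.mul_pos hn t.succ_pos
      set N := n * (t + 1) - 1 with hN
      -- the big clique in W'
      set A : Finset V' := (Finset.univ ×ˢ d).image g0 with hAdef
      have hAcard : A.card = N + 1 := by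
        rw [hAdef, Finset.card_image_of_injective _ g0.injective, Finset.card_product,
          Finset.card_univ, Fintype.card_fin, hdcard]
        omega
      have blow_adj : ∀ (i j : Fin n) (a a' : V), (i, a) ≠ (j, a') → a ∈ d → a' ∈ d →
          (strongProd (⊤ : SimpleGraph (Fin n)) T).Adj (i, a) (j, a') := by
        intro i j a a' hne ha ha'
        by_cases hab : a = a'
        · subst hab
          have hij : i ≠ j := fun h => hne (by rw [h])
          exact Or.inr (Or.inl ⟨rfl, hij⟩)
        · have hadj : T.Adj a a' := hdclq ha ha' hab
          by_cases hij : i = j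
          · exact Or.inl ⟨hij, hadj⟩
          · exact Or.inr (Or.inr ⟨hij, hadj⟩)
      have hAclq : W'.IsClique ↑A := by
        intro x hx z hz hxz
        simp only [hAdef, Finset.coe_image, Set.mem_image, Finset.mem_coe,
          Finset.mem_product, Finset.mem_univ, true_and] at hx hz
        obtain ⟨⟨i, a⟩, ha, rfl⟩ := hx
        obtain ⟨⟨j, a'⟩, ha', rfl⟩ := hz
        exact hg0 _ _ (blow_adj i j a a' (fun h => hxz (by rw [h])) ha ha')
      set A₀ : Finset V' := (Finset.univ ×ˢ s).image g0 with hA₀def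
      have hA₀sub : A₀ ⊆ A := by
        apply Finset.image_subset_image
        exact Finset.product_subset_product_right hsd
      have hA₀card : A₀.card + n = N + 1 := by
        rw [hA₀def, Finset.card_image_of_injective _ g0.injective, Finset.card_product,
          Finset.card_univ, Fintype.card_fin, hcard]
        omega
      obtain ⟨V'', W'', g, y, hW'', hg, hyinj, hyg, hyy, hyA⟩ :=
        ktree_attach hW' A hAclq hAcard n A₀ hA₀sub hA₀card
      -- final embedding
      have hmemA₀ : ∀ (i : Fin n) (a : V), a ∈ s → g0 (i, a) ∈ A₀ := by
        intro i a ha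
        exact Finset.mem_image_of_mem _ (Finset.mem_product.2 ⟨Finset.mem_univ _, ha⟩)
      set F0 : Fin n × Option V → V'' := fun x =>
        x.2.elim (y x.1) (fun a => g (g0 (x.1, a))) with hF0
      have hFinj : Function.Injective F0 := by
        rintro ⟨i, _ | a⟩ ⟨j, _ | b⟩ h <;>
          simp only [hF0, Option.elim_none, Option.elim_some] at h
        · rw [hyinj h]
        · exact absurd h (hyg i (g0 (j, b)))
        · exact absurd h.symm (hyg j (g0 (i, a)))
        · obtain ⟨h1, h2⟩ := Prod.ext_iff.1 (g0.injective (g.injective h))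
          exact Prod.ext h1 (congrArg some h2)
      have hFadj : ∀ u w, (strongProd (⊤ : SimpleGraph (Fin n)) (addVertex T ↑s)).Adj u w →
          W''.Adj (F0 u) (F0 w) := by
        rintro ⟨i, _ | a⟩ ⟨j, _ | b⟩ hadj <;>
          simp only [hF0, Option.elim_none, Option.elim_some]
        · -- none none
          rcases hadj with ⟨-, h2⟩ | ⟨-, h2⟩ | ⟨-, h2⟩
          · exact absurd h2 (addVertex_none_none _ _)
          · exact hyy i j h2
          · exact absurd h2 (addVertex_none_none _ _)
        · -- none, some b
          have hb : b ∈ s := by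
            rcases hadj with ⟨-, h2⟩ | ⟨h2, -⟩ | ⟨-, h2⟩
            · exact (addVertex_none_some _ _ _).1 h2
            · exact absurd h2 (by simp)
            · exact (addVertex_none_some _ _ _).1 h2
          exact hyA i (g0 (j, b)) (hmemA₀ j b hb)
        · -- some a, none
          have ha : a ∈ s := by
            rcases hadj with ⟨-, h2⟩ | ⟨h2, -⟩ | ⟨-, h2⟩
            · exact (addVertex_some_none _ _ _).1 h2
            · exact absurd h2 (by simp)
            · exact (addVertex_some_none _ _ _).1 h2
          exact (hyA j (g0 (i, a)) (hmemA₀ i a ha)).symm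
        · -- some some
          have : (strongProd (⊤ : SimpleGraph (Fin n)) T).Adj (i, a) (j, b) := by
            rcases hadj with ⟨h1, h2⟩ | ⟨h1, h2⟩ | ⟨h1, h2⟩
            · exact Or.inl ⟨h1, (addVertex_some_some _ _ _ _).1 h2⟩
            · exact Or.inr (Or.inl ⟨Option.some_injective _ h1, h2⟩)
            · exact Or.inr (Or.inr ⟨h1, (addVertex_some_some _ _ _ _).1 h2⟩)
          exact hg _ _ (hg0 _ _ this)
      exact ⟨V'', W'', hW'', ⟨F0, hFinj⟩, hFadj⟩

lemma row_bound {gamma beta : Type} {m : ℕ} (G : SimpleGraph gamma) (H : SimpleGraph beta)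
    (f : gamma ↪ Fin m × beta)
    (hf : ∀ u v, G.Adj u v → (strongProd (pathGraph m) H).Adj (f u) (f v)) :
    ∀ {a b : gamma} (p : G.Walk a b),
      ((f a).1 : ℕ) ≤ (f b).1 + p.length ∧ ((f b).1 : ℕ) ≤ (f a).1 + p.length := by
  intro a b p
  induction p with
  | nil => simp
  | @cons u c w h q ih =>
      have hstep : ((f u).1 : ℕ) ≤ (f c).1 + 1 ∧ ((f c).1 : ℕ) ≤ (f u).1 + 1 := by
        rcases hf _ _ h with ⟨h1, -⟩ | ⟨-, h2⟩ | ⟨h2, -⟩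
        · have := congrArg Fin.val h1
          omega
        · rw [pathGraph_adj] at h2
          omega
        · rw [pathGraph_adj] at h2
          omega
      rw [Walk.length_cons]
      omega

/-- If `G` is a subgraph of `P ⊠ H` for a path `P` and a graph `H` of treewidth at most
`t`, then for every vertex `v` and every `k ≥ 0` the subgraph of `G` induced by the `k`-th
closed neighborhood of `v` has treewidth at most `(2k+1)(t+1) − 1`. -/
theorem treewidth_closed_neighborhood_of_subgraph_strongProd_path
    {gamma beta : Type} (G : SimpleGraph gamma) (m t : ℕ) (H : SimpleGraph beta)
    (hH : HasTreewidthLE H t)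
    (f : gamma ↪ Fin m × beta)
    (hf : ∀ u v, G.Adj u v → (strongProd (pathGraph m) H).Adj (f u) (f v))
    (v : gamma) (k : ℕ) :
    HasTreewidthLE (G.induce {u | ∃ p : G.Walk v u, p.length ≤ k})
      ((2 * k + 1) * (t + 1) - 1) := by
  classical
  obtain ⟨VT, T, hT, fT, hfT⟩ := hH
  set S : Set gamma := {u | ∃ p : G.Walk v u, p.length ≤ k} with hS
  have hrow : ∀ u : S, ((f v).1 : ℕ) ≤ (f u).1 + k ∧ ((f u).1 : ℕ) ≤ (f v).1 + k := by
    rintro ⟨u, p, hp⟩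
    have := row_bound G H f hf p
    simp only [Subtype.coe_mk]
    omega
  set F0 : S → Fin (2 * k + 1) × VT := fun u =>
    (⟨(f u).1 + k - (f v).1, by have := (hrow u).2; omega⟩, fT (f u).2) with hF0
  have hFinj : Function.Injective F0 := by
    intro u w h
    obtain ⟨h1, h2⟩ := Prod.ext_iff.1 h
    have hv1 := (hrow u).1
    have hv2 := (hrow w).1
    have h1' : ((f u).1 : ℕ) + k - (f v).1 = ((f w).1 : ℕ) + k - (f v).1 :=
      congrArg Fin.val h1
    have hfst : ((f u).1 : ℕ) = (f w).1 := by omega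
    have hsnd : ((f u).2 : beta) = (f w).2 := fT.injective h2
    have : f u = f w := Prod.ext (Fin.ext hfst) hsnd
    exact Subtype.ext (f.injective this)
  have hFadj : ∀ u w, (G.induce S).Adj u w →
      (strongProd (⊤ : SimpleGraph (Fin (2 * k + 1))) T).Adj (F0 u) (F0 w) := by
    intro u w hadj
    have hG : G.Adj ↑u ↑w := hadj
    have hne : ∀ (h : ((f u).1 : ℕ) ≠ ((f w).1 : ℕ)),
        (⟨(f ↑u).1 + k - (f v).1, by have := (hrow u).2; omega⟩ : Fin (2 * k + 1)) ≠
          ⟨(f ↑w).1 + k - (f v).1, by have := (hrow w).2; omega⟩ := by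
      intro h hEq
      have := congrArg Fin.val hEq
      have hv1 := (hrow u).1
      have hv2 := (hrow w).1
      simp only at this
      omega
    rcases hf _ _ hG with ⟨h1, h2⟩ | ⟨h1, h2⟩ | ⟨h1, h2⟩
    · exact Or.inl ⟨by simp [hF0, congrArg Fin.val h1], hfT _ _ h2⟩
    · refine Or.inr (Or.inl ⟨by simp [hF0, h1], ?_⟩)
      rw [pathGraph_adj] at h2
      exact hne (by omega)
    · refine Or.inr (Or.inr ⟨?_, hfT _ _ h2⟩)
      rw [pathGraph_adj] at h1
      exact hne (by omega)
  obtain ⟨V', W', hW', g, hg⟩ := blowup_treewidth hT (2 * k + 1) (by omega)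
  exact ⟨V', W', hW', (⟨F0, hFinj⟩ : S ↪ _).trans g,
    fun u w h => hg _ _ (hFadj u w h)⟩
end

section
/- Let S(n) denote the sequence defined by S(n) = ‖P_n^{m(n)}‖ where ‖P_n^m‖ = ((m−1)·sin(2π/n) − sin((m−1)·2π/n))/(n·sin(2π/n)) extended appropriately via ‖P_n^m‖ = 1 − ‖P_n^{n−m+2}‖ for m > n/2, and m(n) = n/2+2, ⌈n/2⌉+1, n/2+1, ⌈n/2⌉+2 according to n ≡ 0,1,2,3 (mod 4). Then for n ≡ 2 (mod 4), S(n) = 1/2 exactly, and lim_{n→∞} S(n) = 1/2. -/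
open Real Filter

/-- Raw segment-area fraction `((m−1)·sin θ − sin((m−1)θ))/(n·sin θ)` with `θ = 2π/n`,
valid for `m ≤ n/2 + 1`. -/
noncomputable def segFracRaw (n m : ℕ) : ℝ :=
  (((m : ℝ) - 1) * Real.sin (2 * π / n) - Real.sin (((m : ℝ) - 1) * (2 * π / n)))
    / ((n : ℝ) * Real.sin (2 * π / n))

/-- The fraction `‖P_n^m‖` of the area of a unit-area regular `n`-gon covered by the
convex hull of `m` consecutive corners, extended via `‖P_n^m‖ = 1 − ‖P_n^{n−m+2}‖`. -/
noncomputable def segFrac (n m : ℕ) : ℝ :=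
  if (m : ℝ) ≤ (n : ℝ) / 2 + 1 then segFracRaw n m else 1 - segFracRaw n (n - m + 2)

/-- The threshold value `s(n)` from the paper. -/
noncomputable def sFun (n : ℕ) : ℝ :=
  if n % 4 = 0 then segFrac n (n / 2 + 2)
  else if n % 4 = 1 then segFrac n ((n + 1) / 2 + 1)
  else if n % 4 = 2 then segFrac n (n / 2 + 1)
  else segFrac n ((n + 1) / 2 + 2)

lemma sin_theta_pos {n : ℕ} (hn : 3 ≤ n) : 0 < Real.sin (2 * π / n) := by
  have hn0 : (0:ℝ) < n := by
    have : (0:ℕ) < n := by omega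
    exact_mod_cast this
  apply Real.sin_pos_of_pos_of_lt_pi
  · positivity
  · rw [div_lt_iff₀ hn0]
    have : (3:ℝ) ≤ n := by exact_mod_cast hn
    nlinarith [Real.pi_pos]

lemma nsin_ge {n : ℕ} (hn : 4 ≤ n) : (4:ℝ) ≤ (n:ℝ) * Real.sin (2 * π / n) := by
  have hn0 : (0:ℝ) < n := by
    have : (0:ℕ) < n := by omega
    exact_mod_cast this
  have hn4 : (4:ℝ) ≤ n := by exact_mod_cast hn
  have h1 : 2 / π * (2 * π / n) ≤ Real.sin (2 * π / n) := by
    apply Real.mul_le_sin (by positivity)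
    rw [div_le_div_iff₀ hn0 (by norm_num : (0:ℝ) < 2)]
    nlinarith [Real.pi_pos]
  have h2 : 2 / π * (2 * π / n) = 4 / n := by
    have := Real.pi_ne_zero
    field_simp
    ring
  rw [h2] at h1
  calc (4:ℝ) = n * (4 / n) := by field_simp
    _ ≤ n * Real.sin (2 * π / n) := mul_le_mul_of_nonneg_left h1 (le_of_lt hn0)

lemma case2 (k : ℕ) (hk : 1 ≤ k) : sFun (4 * k + 2) = 1 / 2 := by
  have hn3 : 3 ≤ 4 * k + 2 := by omega
  have hs := sin_theta_pos hn3
  have hk1 : (1:ℝ) ≤ k := by exact_mod_cast hk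
  have hmod0 : ¬ (4 * k + 2) % 4 = 0 := by omega
  have hmod1 : ¬ (4 * k + 2) % 4 = 1 := by omega
  have hmod2 : (4 * k + 2) % 4 = 2 := by omega
  have hdiv : (4 * k + 2) / 2 + 1 = 2 * k + 2 := by omega
  have hcond : ((2 * k + 2 : ℕ) : ℝ) ≤ ((4 * k + 2 : ℕ) : ℝ) / 2 + 1 := by
    push_cast; linarith
  rw [sFun, if_neg hmod0, if_neg hmod1, if_pos hmod2, hdiv, segFrac, if_pos hcond,
    segFracRaw]
  have harg : (((2 * k + 2 : ℕ) : ℝ) - 1) * (2 * π / ((4 * k + 2 : ℕ) : ℝ)) = π := by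
    have h0 : ((4:ℝ) * k + 2) ≠ 0 := by positivity
    push_cast
    field_simp
    ring
  rw [harg, Real.sin_pi, sub_zero]
  push_cast at hs ⊢
  generalize Real.sin (2 * π / (4 * (k:ℝ) + 2)) = s at hs ⊢
  have hs' : s ≠ 0 := hs.ne'
  have h0 : ((4:ℝ) * k + 2) ≠ 0 := by positivity
  field_simp
  ring

lemma case0 (k : ℕ) (hk : 1 ≤ k) :
    sFun (4 * k) = 1 / 2 + 2 / ((4 * k : ℕ) : ℝ) := by
  have hn3 : 3 ≤ 4 * k := by omega
  have hs := sin_theta_pos hn3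
  have hk1 : (1:ℝ) ≤ k := by exact_mod_cast hk
  have hmod0 : (4 * k) % 4 = 0 := by omega
  have hdiv : (4 * k) / 2 + 2 = 2 * k + 2 := by omega
  have hsub : 4 * k - (2 * k + 2) + 2 = 2 * k := by omega
  have hcond : ¬ ((2 * k + 2 : ℕ) : ℝ) ≤ ((4 * k : ℕ) : ℝ) / 2 + 1 := by
    push_cast; intro h; linarith
  rw [sFun, if_pos hmod0, hdiv, segFrac, if_neg hcond, hsub, segFracRaw]
  have h0 : ((4:ℝ) * k) ≠ 0 := by positivity
  have harg : (((2 * k : ℕ) : ℝ) - 1) * (2 * π / ((4 * k : ℕ) : ℝ))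
      = π - 2 * π / ((4 * k : ℕ) : ℝ) := by
    push_cast
    field_simp
    ring
  rw [harg, Real.sin_pi_sub]
  push_cast at hs ⊢
  generalize Real.sin (2 * π / (4 * (k:ℝ))) = s at hs ⊢
  have hs' : s ≠ 0 := hs.ne'
  field_simp
  ring

lemma case1 (k : ℕ) (hk : 1 ≤ k) :
    sFun (4 * k + 1) = 1 / 2 + 1 / (2 * ((4 * k + 1 : ℕ) : ℝ))
      + Real.sin (1 * π / ((4 * k + 1 : ℕ) : ℝ))
        / (((4 * k + 1 : ℕ) : ℝ) * Real.sin (2 * π / ((4 * k + 1 : ℕ) : ℝ))) := by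
  have hn3 : 3 ≤ 4 * k + 1 := by omega
  have hs := sin_theta_pos hn3
  have hk1 : (1:ℝ) ≤ k := by exact_mod_cast hk
  have hmod0 : ¬ (4 * k + 1) % 4 = 0 := by omega
  have hmod1 : (4 * k + 1) % 4 = 1 := by omega
  have hdiv : (4 * k + 1 + 1) / 2 + 1 = 2 * k + 2 := by omega
  have hsub : 4 * k + 1 - (2 * k + 2) + 2 = 2 * k + 1 := by omega
  have hcond : ¬ ((2 * k + 2 : ℕ) : ℝ) ≤ ((4 * k + 1 : ℕ) : ℝ) / 2 + 1 := by
    push_cast; intro h; linarith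
  rw [sFun, if_neg hmod0, if_pos hmod1, hdiv, segFrac, if_neg hcond, hsub, segFracRaw]
  have h0 : ((4:ℝ) * k + 1) ≠ 0 := by positivity
  have harg : (((2 * k + 1 : ℕ) : ℝ) - 1) * (2 * π / ((4 * k + 1 : ℕ) : ℝ))
      = π - 1 * π / ((4 * k + 1 : ℕ) : ℝ) := by
    push_cast
    field_simp
    ring
  rw [harg, Real.sin_pi_sub]
  push_cast at hs ⊢
  generalize Real.sin (2 * π / (4 * (k:ℝ) + 1)) = s at hs ⊢
  have hs' : s ≠ 0 := hs.ne'
  field_simp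
  ring

lemma case3 (k : ℕ) (hk : 1 ≤ k) :
    sFun (4 * k + 3) = 1 / 2 + 3 / (2 * ((4 * k + 3 : ℕ) : ℝ))
      + Real.sin (3 * π / ((4 * k + 3 : ℕ) : ℝ))
        / (((4 * k + 3 : ℕ) : ℝ) * Real.sin (2 * π / ((4 * k + 3 : ℕ) : ℝ))) := by
  have hn3 : 3 ≤ 4 * k + 3 := by omega
  have hs := sin_theta_pos hn3
  have hk1 : (1:ℝ) ≤ k := by exact_mod_cast hk
  have hmod0 : ¬ (4 * k + 3) % 4 = 0 := by omega
  have hmod1 : ¬ (4 * k + 3) % 4 = 1 := by omega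
  have hmod2 : ¬ (4 * k + 3) % 4 = 2 := by omega
  have hdiv : (4 * k + 3 + 1) / 2 + 2 = 2 * k + 4 := by omega
  have hsub : 4 * k + 3 - (2 * k + 4) + 2 = 2 * k + 1 := by omega
  have hcond : ¬ ((2 * k + 4 : ℕ) : ℝ) ≤ ((4 * k + 3 : ℕ) : ℝ) / 2 + 1 := by
    push_cast; intro h; linarith
  rw [sFun, if_neg hmod0, if_neg hmod1, if_neg hmod2, hdiv, segFrac, if_neg hcond,
    hsub, segFracRaw]
  have h0 : ((4:ℝ) * k + 3) ≠ 0 := by positivity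
  have harg : (((2 * k + 1 : ℕ) : ℝ) - 1) * (2 * π / ((4 * k + 3 : ℕ) : ℝ))
      = π - 3 * π / ((4 * k + 3 : ℕ) : ℝ) := by
    push_cast
    field_simp
    ring
  rw [harg, Real.sin_pi_sub]
  push_cast at hs ⊢
  generalize Real.sin (2 * π / (4 * (k:ℝ) + 3)) = s at hs ⊢
  have hs' : s ≠ 0 := hs.ne'
  field_simp
  ring

lemma sterm_bounds {n : ℕ} {a : ℝ} (hn : 7 ≤ n) (ha0 : 0 ≤ a) (ha3 : a ≤ 3) :
    0 ≤ Real.sin (a * π / n) / ((n:ℝ) * Real.sin (2 * π / n)) ∧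
      Real.sin (a * π / n) / ((n:ℝ) * Real.sin (2 * π / n)) ≤ 3 / (n:ℝ) := by
  have hn0 : (0:ℝ) < n := by
    have : (0:ℕ) < n := by omega
    exact_mod_cast this
  have hn7 : (7:ℝ) ≤ n := by exact_mod_cast hn
  have hpi := Real.pi_pos
  have hD : (4:ℝ) ≤ (n:ℝ) * Real.sin (2 * π / n) := nsin_ge (by omega)
  have hx0 : 0 ≤ a * π / n := by positivity
  have hxpi : a * π / n ≤ π := by
    rw [div_le_iff₀ hn0]
    nlinarith
  have hs0 : 0 ≤ Real.sin (a * π / n) := Real.sin_nonneg_of_nonneg_of_le_pi hx0 hxpi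
  constructor
  · have : (0:ℝ) < (n:ℝ) * Real.sin (2 * π / n) := by linarith
    positivity
  · have h1 : Real.sin (a * π / n) / ((n:ℝ) * Real.sin (2 * π / n))
        ≤ Real.sin (a * π / n) / 4 :=
      div_le_div_of_nonneg_left hs0 (by norm_num) hD
    have h2 : Real.sin (a * π / n) ≤ a * π / n := Real.sin_le hx0
    have h3 : a * π / n ≤ 10 / n := by
      have hpl : π < 3.15 := Real.pi_lt_d2
      have haπ : a * π ≤ 10 := by nlinarith
      gcongr
    calc Real.sin (a * π / n) / ((n:ℝ) * Real.sin (2 * π / n))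
        ≤ Real.sin (a * π / n) / 4 := h1
      _ ≤ (10 / n) / 4 := by linarith
      _ ≤ 3 / n := by
          rw [div_div, div_le_div_iff₀ (by positivity) hn0]
          linarith

lemma sFun_bounds {n : ℕ} (hn : 7 ≤ n) :
    1 / 2 ≤ sFun n ∧ sFun n ≤ 1 / 2 + 6 / (n:ℝ) := by
  have hn0 : (0:ℝ) < n := by
    have : (0:ℕ) < n := by omega
    exact_mod_cast this
  have hn7 : (7:ℝ) ≤ n := by exact_mod_cast hn
  obtain ⟨k, hk, hrep⟩ : ∃ k, 1 ≤ k ∧ (n = 4 * k ∨ n = 4 * k + 1 ∨ n = 4 * k + 2 ∨ n = 4 * k + 3) :=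
    ⟨n / 4, by omega, by omega⟩
  rcases hrep with rfl | rfl | rfl | rfl
  · rw [case0 k hk]
    have e1 : (0:ℝ) ≤ 2 / ((4 * k : ℕ) : ℝ) := by positivity
    have e2 : 2 / ((4 * k : ℕ) : ℝ) ≤ 6 / ((4 * k : ℕ) : ℝ) := by gcongr <;> norm_num
    exact ⟨by linarith, by linarith⟩
  · rw [case1 k hk]
    obtain ⟨t1, t2⟩ := sterm_bounds (n := 4 * k + 1) (a := 1) hn (by norm_num) (by norm_num)
    have e1 : (0:ℝ) ≤ 1 / (2 * ((4 * k + 1 : ℕ) : ℝ)) := by positivity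
    have e2 : 1 / (2 * ((4 * k + 1 : ℕ) : ℝ)) ≤ 3 / ((4 * k + 1 : ℕ) : ℝ) := by
      rw [div_le_div_iff₀ (by positivity) hn0]
      linarith
    have e3 : 3 / ((4 * k + 1 : ℕ) : ℝ) + 3 / ((4 * k + 1 : ℕ) : ℝ)
        = 6 / ((4 * k + 1 : ℕ) : ℝ) := by ring
    exact ⟨by linarith, by linarith⟩
  · rw [case2 k hk]
    have e1 : (0:ℝ) ≤ 6 / ((4 * k + 2 : ℕ) : ℝ) := by positivity
    exact ⟨le_refl _, by linarith⟩
  · rw [case3 k hk]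
    obtain ⟨t1, t2⟩ := sterm_bounds (n := 4 * k + 3) (a := 3) hn (by norm_num) (by norm_num)
    have e1 : (0:ℝ) ≤ 3 / (2 * ((4 * k + 3 : ℕ) : ℝ)) := by positivity
    have e2 : 3 / (2 * ((4 * k + 3 : ℕ) : ℝ)) ≤ 3 / ((4 * k + 3 : ℕ) : ℝ) := by
      rw [div_le_div_iff₀ (by positivity) hn0]
      linarith
    have e3 : 3 / ((4 * k + 3 : ℕ) : ℝ) + 3 / ((4 * k + 3 : ℕ) : ℝ)
        = 6 / ((4 * k + 3 : ℕ) : ℝ) := by ring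
    exact ⟨by linarith, by linarith⟩

/-- For `n ≡ 2 (mod 4)` the threshold `s(n)` equals `1/2` exactly, and
`s(n)` converges to `1/2` as `n → ∞`. -/
theorem sFun_half_and_tendsto :
    (∀ n : ℕ, 3 ≤ n → n % 4 = 2 → sFun n = 1 / 2) ∧
    Tendsto sFun atTop (nhds (1 / 2)) := by
  constructor
  · intro n h3 h2
    obtain ⟨k, hk, rfl⟩ : ∃ k, 1 ≤ k ∧ n = 4 * k + 2 := ⟨n / 4, by omega, by omega⟩
    exact case2 k hk
  · have hupp : Tendsto (fun n : ℕ => 1 / 2 + 6 / (n:ℝ)) atTop (nhds (1 / 2)) := by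
      have := tendsto_const_div_atTop_nhds_zero_nat (6:ℝ)
      simpa using tendsto_const_nhds.add this
    apply tendsto_of_tendsto_of_tendsto_of_le_of_le' tendsto_const_nhds hupp
    · filter_upwards [eventually_ge_atTop 7] with n hn
      exact (sFun_bounds hn).1
    · filter_upwards [eventually_ge_atTop 7] with n hn
      exact (sFun_bounds hn).2
end
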